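/- Let p > 1, ω > 0 and a ∈ ℝ, and define φ : [0,∞) → ℝ by φ(x) = (((p+1)ω/2)·sech²(((p−1)√ω/2)·x + a))^{1/(p−1)}. Then φ, φ' and φ^{p+1} are integrable on (0,∞) and the Pohozaev-type equality ∫₀^∞ φ'(x)² dx − ω·∫₀^∞ φ(x)² dx + (2/(p+1))·∫₀^∞ φ(x)^{p+1} dx = 0 holds. -/

import Mathlib

open MeasureTheory Real Set Filter Topology

lemma cosh_rpow_integrable (b a s : ℝ) (hb : 0 < b) (hs : s < 0) :
    IntegrableOn (fun x : ℝ => Real.cosh (b * x + a) ^ s) (Set.Ioi 0) := by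
  have hg : IntegrableOn (fun x : ℝ => (2:ℝ) ^ (-s) * Real.exp (s*a) * Real.exp (s*b*x))
      (Set.Ioi 0) := by
    have := (exp_neg_integrableOn_Ioi 0 (b := -(s*b)) (by nlinarith)).const_mul
      ((2:ℝ) ^ (-s) * Real.exp (s*a))
    simpa [IntegrableOn, neg_neg, mul_assoc, mul_comm, mul_left_comm] using this
  refine Integrable.mono' hg ?_ ?_
  · exact ((Real.continuous_cosh.comp (by continuity)).rpow_const
      (fun x => Or.inl (Real.cosh_pos _).ne')).aestronglyMeasurable
  · filter_upwards with x
    have hc : (0:ℝ) < Real.cosh (b*x+a) := Real.cosh_pos _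
    rw [Real.norm_eq_abs, abs_of_nonneg (Real.rpow_nonneg hc.le _)]
    have h1 : Real.exp (b*x+a) / 2 ≤ Real.cosh (b*x+a) := by
      rw [Real.cosh_eq]
      have := Real.exp_pos (-(b*x+a)); linarith
    have h2 : Real.cosh (b*x+a) ^ s ≤ (Real.exp (b*x+a) / 2) ^ s :=
      Real.rpow_le_rpow_of_nonpos (by positivity) h1 hs.le
    calc Real.cosh (b*x+a) ^ s ≤ (Real.exp (b*x+a) / 2) ^ s := h2
      _ = (2:ℝ)^(-s) * Real.exp (s*a) * Real.exp (s*b*x) := by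
          rw [Real.div_rpow (Real.exp_pos _).le (by norm_num), ← Real.exp_mul,
            Real.rpow_neg (by norm_num)]
          rw [div_eq_mul_inv, mul_comm, mul_assoc, ← Real.exp_add]
          ring_nf

/-- The translated soliton profile on the half-line is integrable (together with its
derivative and `(p+1)`-st power) and satisfies the Pohozaev-type equality
`∫φ'² − ω∫φ² + (2/(p+1))∫φ^{p+1} = 0`. -/
theorem soliton_pohozaev (p ω a : ℝ) (hp : 1 < p) (hω : 0 < ω)
    (φ : ℝ → ℝ)
    (hφ : φ = fun x : ℝ => ((p + 1) * ω / 2 *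
      (1 / Real.cosh ((p - 1) * Real.sqrt ω / 2 * x + a)) ^ 2) ^ (1 / (p - 1))) :
    IntegrableOn φ (Set.Ioi 0) ∧
    IntegrableOn (deriv φ) (Set.Ioi 0) ∧
    IntegrableOn (fun x => φ x ^ (p + 1)) (Set.Ioi 0) ∧
    (∫ x in Set.Ioi (0 : ℝ), (deriv φ x) ^ 2)
      - ω * (∫ x in Set.Ioi (0 : ℝ), (φ x) ^ 2)
      + 2 / (p + 1) * (∫ x in Set.Ioi (0 : ℝ), φ x ^ (p + 1)) = 0 := by
  have hp1 : (0:ℝ) < p - 1 := by linarith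
  have hsω : 0 < Real.sqrt ω := Real.sqrt_pos.mpr hω
  set b : ℝ := (p - 1) * Real.sqrt ω / 2 with hbdef
  set C : ℝ := (p + 1) * ω / 2 with hCdef
  set r : ℝ := (-2) * (1 / (p - 1)) with hrdef
  have hb : 0 < b := by rw [hbdef]; nlinarith [mul_pos hp1 hsω]
  have hC : 0 < C := by rw [hCdef]; nlinarith
  set C' : ℝ := C ^ (1 / (p - 1)) with hC'def
  have hC' : 0 < C' := Real.rpow_pos_of_pos hC _
  have hr : r < 0 := by
    have h1 : (0:ℝ) < 1 / (p - 1) := by positivity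
    nlinarith
  -- rewrite φ
  have hφ' : φ = fun x : ℝ => C' * Real.cosh (b * x + a) ^ r := by
    rw [hφ]; funext x
    have hc : (0:ℝ) < Real.cosh (b * x + a) := Real.cosh_pos _
    have h1 : (1 / Real.cosh (b * x + a)) ^ 2 = Real.cosh (b * x + a) ^ (-2 : ℝ) := by
      rw [one_div, inv_pow, ← Real.rpow_two, ← Real.rpow_neg hc.le]
    rw [h1, Real.mul_rpow hC.le (Real.rpow_nonneg hc.le _), ← Real.rpow_mul hc.le]
  -- derivative
  have hlin : ∀ x : ℝ, HasDerivAt (fun x : ℝ => b * x + a) b x := by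
    intro x; simpa using ((hasDerivAt_id x).const_mul b).add_const a
  have hderiv : ∀ x : ℝ, HasDerivAt φ
      (C' * (r * Real.cosh (b * x + a) ^ (r - 1) * (Real.sinh (b * x + a) * b))) x := by
    intro x
    rw [hφ']
    have h2 : HasDerivAt (fun x : ℝ => Real.cosh (b * x + a))
        (Real.sinh (b * x + a) * b) x := (Real.hasDerivAt_cosh _).comp x (hlin x)
    have h3 := (Real.hasDerivAt_rpow_const (p := r)
      (Or.inl (Real.cosh_pos (b * x + a)).ne')).comp x h2
    exact h3.const_mul C'
  have hDφ : deriv φ = fun x =>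
      C' * (r * Real.cosh (b * x + a) ^ (r - 1) * (Real.sinh (b * x + a) * b)) :=
    funext fun x => (hderiv x).deriv
  -- algebraic facts
  have hrb : r * b = -Real.sqrt ω := by
    rw [hrdef, hbdef]; field_simp
  have hrb2 : (r * b) ^ 2 = ω := by rw [hrb, neg_sq, Real.sq_sqrt hω.le]
  have hωC : 2 / (p + 1) * C = ω := by
    rw [hCdef]; field_simp
  have hcr : ∀ x : ℝ, Real.cosh (b * x + a) ^ r
      = Real.cosh (b * x + a) ^ (r - 1) * Real.cosh (b * x + a) := by
    intro x
    rw [show r = (r - 1) + 1 by ring, Real.rpow_add_one (Real.cosh_pos _).ne']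
    ring_nf
  -- φ^(p+1) rewriting
  have hpow : ∀ x : ℝ, φ x ^ (p + 1) = C * C' ^ 2 * (Real.cosh (b * x + a) ^ (r - 1)) ^ 2 := by
    intro x
    have hc : (0:ℝ) < Real.cosh (b * x + a) := Real.cosh_pos _
    rw [hφ']
    rw [Real.mul_rpow hC'.le (Real.rpow_nonneg hc.le _)]
    have e1 : C' ^ (p + 1) = C * C' ^ 2 := by
      rw [hC'def, ← Real.rpow_natCast (C ^ (1/(p-1))) 2, ← Real.rpow_mul hC.le,
        ← Real.rpow_mul hC.le,
        show (1/(p-1)) * (p+1) = 1 + 1/(p-1) * ((2:ℕ):ℝ) by push_cast; field_simp; ring,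
        Real.rpow_add hC, Real.rpow_one]
    have e2 : (Real.cosh (b * x + a) ^ r) ^ (p + 1)
        = (Real.cosh (b * x + a) ^ (r - 1)) ^ 2 := by
      rw [← Real.rpow_mul hc.le, ← Real.rpow_natCast (Real.cosh (b*x+a) ^ (r-1)) 2,
        ← Real.rpow_mul hc.le]
      congr 1
      rw [hrdef]; push_cast; field_simp; ring
    rw [e1, e2]
  -- pointwise Pohozaev identity
  have h0 : ∀ x : ℝ, (deriv φ x) ^ 2 - ω * φ x ^ 2 + 2 / (p + 1) * φ x ^ (p + 1) = 0 := by
    intro x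
    have hcs := Real.cosh_sq_sub_sinh_sq (b * x + a)
    rw [hpow x, hDφ, hφ']
    beta_reduce
    rw [hcr x]
    set t := Real.cosh (b * x + a) ^ (r - 1)
    set c := Real.cosh (b * x + a)
    set s := Real.sinh (b * x + a)
    linear_combination (C' ^ 2 * t ^ 2 * s ^ 2) * hrb2 + (C' ^ 2 * t ^ 2) * hωC
      - (ω * C' ^ 2 * t ^ 2) * hcs
  -- integrability
  have habs : ∀ x : ℝ, |deriv φ x| ≤ (C' * |r| * b) * Real.cosh (b * x + a) ^ r := by
    intro x
    have hc : (0:ℝ) < Real.cosh (b * x + a) := Real.cosh_pos _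
    have ht : (0:ℝ) ≤ Real.cosh (b * x + a) ^ (r - 1) := Real.rpow_nonneg hc.le _
    have hs : |Real.sinh (b * x + a)| ≤ Real.cosh (b * x + a) := by
      have := Real.cosh_sq_sub_sinh_sq (b * x + a)
      rw [abs_le]; constructor <;> nlinarith
    rw [hDφ]
    calc |C' * (r * Real.cosh (b*x+a) ^ (r-1) * (Real.sinh (b*x+a) * b))|
        = C' * |r| * Real.cosh (b*x+a) ^ (r-1) * |Real.sinh (b*x+a)| * b := by
          simp only [abs_mul]
          rw [abs_of_nonneg hC'.le, abs_of_nonneg ht, abs_of_nonneg hb.le]; ring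
      _ ≤ C' * |r| * Real.cosh (b*x+a) ^ (r-1) * Real.cosh (b*x+a) * b :=
          mul_le_mul_of_nonneg_right (mul_le_mul_of_nonneg_left hs
            (mul_nonneg (mul_nonneg hC'.le (abs_nonneg r)) ht)) hb.le
      _ = (C' * |r| * b) * Real.cosh (b*x+a) ^ r := by rw [hcr x]; ring
  have hcontD : Continuous (deriv φ) := by
    rw [hDφ]
    have hl : Continuous fun x : ℝ => b * x + a :=
      (continuous_const.mul continuous_id).add continuous_const
    exact continuous_const.mul (((continuous_const.mul
      ((Real.continuous_cosh.comp hl).rpow_const fun x => Or.inl (Real.cosh_pos _).ne')).mul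
      ((Real.continuous_sinh.comp hl).mul continuous_const)))
  have hIφ : IntegrableOn φ (Set.Ioi 0) := by
    rw [hφ']; exact (cosh_rpow_integrable b a r hb hr).const_mul C'
  have hIDφ : IntegrableOn (deriv φ) (Set.Ioi 0) := by
    refine Integrable.mono' (((cosh_rpow_integrable b a r hb hr).const_mul
      (C' * |r| * b))) hcontD.aestronglyMeasurable ?_
    filter_upwards with x using habs x
  have hsq2 : ∀ x : ℝ, (Real.cosh (b * x + a) ^ r) ^ 2 = Real.cosh (b * x + a) ^ (r + r) := by
    intro x; rw [sq, ← Real.rpow_add (Real.cosh_pos _)]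
  have hsq1 : ∀ x : ℝ, (Real.cosh (b * x + a) ^ (r - 1)) ^ 2
      = Real.cosh (b * x + a) ^ ((r - 1) + (r - 1)) := by
    intro x; rw [sq, ← Real.rpow_add (Real.cosh_pos _)]
  have hIφp : IntegrableOn (fun x => φ x ^ (p + 1)) (Set.Ioi 0) := by
    have : (fun x => φ x ^ (p + 1))
        = fun x => (C * C' ^ 2) * Real.cosh (b * x + a) ^ ((r - 1) + (r - 1)) := by
      funext x; rw [hpow x, hsq1 x]
    rw [this]
    exact (cosh_rpow_integrable b a _ hb (by linarith)).const_mul _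
  have hIφ2 : IntegrableOn (fun x => φ x ^ 2) (Set.Ioi 0) := by
    have : (fun x => φ x ^ 2) = fun x => C' ^ 2 * Real.cosh (b * x + a) ^ (r + r) := by
      funext x; rw [hφ', ← hsq2 x]; ring
    rw [this]
    exact (cosh_rpow_integrable b a _ hb (by linarith)).const_mul _
  have hID2 : IntegrableOn (fun x => (deriv φ x) ^ 2) (Set.Ioi 0) := by
    refine Integrable.mono' (((cosh_rpow_integrable b a (r + r) hb (by linarith)).const_mul
      ((C' * |r| * b) ^ 2))) (hcontD.pow 2).aestronglyMeasurable ?_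
    filter_upwards with x
    rw [Real.norm_eq_abs, abs_pow, sq_abs, ← sq_abs (deriv φ x)]
    calc |deriv φ x| ^ 2 ≤ ((C' * |r| * b) * Real.cosh (b*x+a) ^ r) ^ 2 :=
          pow_le_pow_left₀ (abs_nonneg _) (habs x) 2
      _ = (C' * |r| * b) ^ 2 * Real.cosh (b*x+a) ^ (r + r) := by
          rw [mul_pow, hsq2 x]
  -- conclude
  refine ⟨hIφ, hIDφ, hIφp, ?_⟩
  have key : ∫ x in Set.Ioi (0:ℝ),
      ((deriv φ x) ^ 2 - ω * φ x ^ 2 + 2 / (p + 1) * φ x ^ (p + 1)) = 0 := by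
    have : (fun x => (deriv φ x) ^ 2 - ω * φ x ^ 2 + 2 / (p + 1) * φ x ^ (p + 1))
        = fun _ : ℝ => (0:ℝ) := funext h0
    rw [this, integral_zero]
  have hsub : Integrable (fun x => deriv φ x ^ 2 - ω * φ x ^ 2)
      (volume.restrict (Set.Ioi 0)) := hID2.sub (hIφ2.const_mul ω)
  have hIp' : Integrable (fun x => 2 / (p + 1) * φ x ^ (p + 1))
      (volume.restrict (Set.Ioi 0)) := hIφp.const_mul _
  rw [integral_add hsub hIp', integral_sub hID2 (hIφ2.const_mul ω),
    integral_const_mul, integral_const_mul] at key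
  exact key
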